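/- For every natural number q there exists a constant C_q > 1, depending only on q, with the following property: for every real polynomial p of degree at most q, all reals a < b, every α ∈ [0,1), and every integer J ≥ 2, | ∫_a^b p(x)² dx − ((b−a)/J)·∑_{j ∈ ℕ, j+α ≤ J} p(a + ((j+α)/J)·(b−a))² | ≤ (C_q/(J−1))·∫_a^b p(x)² dx. -/

import Mathlib

open Finset intervalIntegral Polynomial Set

lemma abs_pow_sub_pow {x y : ℝ} (hx : |x| ≤ 1) (hy : |y| ≤ 1) :
    ∀ i : ℕ, |x ^ i - y ^ i| ≤ i * |x - y| := by
  intro i; induction i with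
  | zero => simp
  | succ n ih =>
    have h : x ^ (n+1) - y ^ (n+1) = x * (x ^ n - y ^ n) + (x - y) * y ^ n := by ring
    have h1 : |x ^ (n+1) - y ^ (n+1)| ≤ |x| * |x ^ n - y ^ n| + |x - y| * |y| ^ n := by
      rw [h]; refine (abs_add_le _ _).trans ?_; rw [abs_mul, abs_mul, abs_pow]
    have h2 : |y| ^ n ≤ 1 := pow_le_one₀ (abs_nonneg y) hy
    have h3 : |x ^ n - y ^ n| ≤ n * |x - y| := ih
    have h4 : |x| * |x ^ n - y ^ n| ≤ n * |x - y| := by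
      nlinarith [abs_nonneg (x ^ n - y ^ n), abs_nonneg x, abs_nonneg (x - y)]
    push_cast
    nlinarith [abs_nonneg (x - y)]

lemma eval_abs_le {g : Polynomial ℝ} {q : ℕ} (hg : g.natDegree ≤ q) {t : ℝ}
    (h0 : 0 ≤ t) (h1 : t ≤ 1) :
    |g.eval t| ≤ ∑ i ∈ range (q+1), |g.coeff i| := by
  rw [Polynomial.eval_eq_sum_range' (lt_of_le_of_lt hg (Nat.lt_succ_self q))]
  refine (Finset.abs_sum_le_sum_abs _ _).trans ?_
  refine Finset.sum_le_sum fun i _ => ?_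
  rw [abs_mul, abs_pow]
  have ht : |t| ≤ 1 := abs_le.mpr ⟨by linarith, h1⟩
  have : |t| ^ i ≤ 1 := pow_le_one₀ (abs_nonneg t) ht
  nlinarith [abs_nonneg (g.coeff i)]

lemma eval_lip {g : Polynomial ℝ} {q : ℕ} (hg : g.natDegree ≤ q) {x y : ℝ}
    (hx0 : 0 ≤ x) (hx1 : x ≤ 1) (hy0 : 0 ≤ y) (hy1 : y ≤ 1) :
    |g.eval x - g.eval y| ≤ (q * ∑ i ∈ range (q+1), |g.coeff i|) * |x - y| := by
  rw [Polynomial.eval_eq_sum_range' (lt_of_le_of_lt hg (Nat.lt_succ_self q)) x,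
      Polynomial.eval_eq_sum_range' (lt_of_le_of_lt hg (Nat.lt_succ_self q)) y,
      ← Finset.sum_sub_distrib]
  refine (Finset.abs_sum_le_sum_abs _ _).trans ?_
  rw [Finset.mul_sum, Finset.sum_mul]
  refine Finset.sum_le_sum fun i hi => ?_
  have hxa : |x| ≤ 1 := abs_le.mpr ⟨by linarith, hx1⟩
  have hya : |y| ≤ 1 := abs_le.mpr ⟨by linarith, hy1⟩
  have h1 : |x ^ i - y ^ i| ≤ i * |x - y| := abs_pow_sub_pow hxa hya i
  have hiq : (i : ℝ) ≤ q := by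
    have := Finset.mem_range.mp hi; exact_mod_cast Nat.lt_succ_iff.mp this
  have : g.coeff i * x ^ i - g.coeff i * y ^ i = g.coeff i * (x ^ i - y ^ i) := by ring
  rw [this, abs_mul]
  have hc := abs_nonneg (g.coeff i)
  have h2 : |g.coeff i| * |x ^ i - y ^ i| ≤ |g.coeff i| * ((i:ℝ) * |x - y|) :=
    mul_le_mul_of_nonneg_left h1 hc
  have h3 : (i:ℝ) * (|g.coeff i| * |x - y|) ≤ (q:ℝ) * (|g.coeff i| * |x - y|) :=
    mul_le_mul_of_nonneg_right hiq (mul_nonneg hc (abs_nonneg _))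
  nlinarith

lemma integral_sq_eq {g : Polynomial ℝ} {q : ℕ} (hg : g.natDegree ≤ q) :
    (∫ t in (0:ℝ)..1, (g.eval t) ^ 2) =
      ∑ i ∈ range (q+1), ∑ j ∈ range (q+1),
        g.coeff i * g.coeff j / ((i : ℝ) + j + 1) := by
  have hlt := lt_of_le_of_lt hg (Nat.lt_succ_self q)
  have hrw : ∀ t : ℝ, (g.eval t) ^ 2 =
      ∑ i ∈ range (q+1), ∑ j ∈ range (q+1),
        (g.coeff i * g.coeff j) * t ^ (i + j) := by
    intro t
    rw [Polynomial.eval_eq_sum_range' hlt, sq, Finset.sum_mul_sum]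
    refine Finset.sum_congr rfl fun i _ => Finset.sum_congr rfl fun j _ => ?_
    rw [pow_add]; ring
  calc (∫ t in (0:ℝ)..1, (g.eval t) ^ 2)
      = ∫ t in (0:ℝ)..1, ∑ i ∈ range (q+1), ∑ j ∈ range (q+1),
          (g.coeff i * g.coeff j) * t ^ (i + j) := by
        refine intervalIntegral.integral_congr fun t _ => hrw t
    _ = ∑ i ∈ range (q+1), ∫ t in (0:ℝ)..1, ∑ j ∈ range (q+1),
          (g.coeff i * g.coeff j) * t ^ (i + j) := by
        exact intervalIntegral.integral_finset_sum fun i _ =>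
          (Continuous.intervalIntegrable (by continuity) _ _)
    _ = ∑ i ∈ range (q+1), ∑ j ∈ range (q+1), ∫ t in (0:ℝ)..1,
          (g.coeff i * g.coeff j) * t ^ (i + j) := by
        refine Finset.sum_congr rfl fun i _ => ?_
        exact intervalIntegral.integral_finset_sum fun j _ =>
          (Continuous.intervalIntegrable (by continuity) _ _)
    _ = ∑ i ∈ range (q+1), ∑ j ∈ range (q+1),
          g.coeff i * g.coeff j / ((i : ℝ) + j + 1) := by
        refine Finset.sum_congr rfl fun i _ => Finset.sum_congr rfl fun j _ => ?_
        rw [intervalIntegral.integral_const_mul, integral_pow]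
        push_cast
        rw [one_pow, zero_pow (by positivity)]
        ring

lemma key_lemma (q : ℕ) : ∃ m : ℝ, 0 < m ∧ ∀ g : Polynomial ℝ, g.natDegree ≤ q →
    m * (∑ i ∈ range (q+1), |g.coeff i|) ^ 2 ≤ ∫ t in (0:ℝ)..1, (g.eval t) ^ 2 := by
  classical
  set n := q + 1 with hn
  let P : (Fin n → ℝ) → Polynomial ℝ := fun c => ∑ i : Fin n, Polynomial.monomial (i : ℕ) (c i)
  have hPdeg : ∀ c, (P c).natDegree ≤ q := by
    intro c
    refine Polynomial.natDegree_sum_le_of_forall_le _ _ fun i _ => ?_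
    exact (Polynomial.natDegree_monomial_le _).trans (Nat.lt_succ_iff.mp i.isLt)
  have hPcoeff : ∀ c (i : Fin n), (P c).coeff (i : ℕ) = c i := by
    intro c i
    rw [Polynomial.finset_sum_coeff]
    rw [Finset.sum_eq_single i]
    · simp
    · intro j _ hj
      rw [Polynomial.coeff_monomial, if_neg (fun h => hj (Fin.ext h))]
    · simp
  set Φ : (Fin n → ℝ) → ℝ := fun c => ∫ t in (0:ℝ)..1, ((P c).eval t) ^ 2 with hΦdef
  have hΦ : ∀ c, Φ c = ∑ i : Fin n, ∑ j : Fin n,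
      c i * c j / ((i : ℕ) + (j : ℕ) + 1) := by
    intro c
    rw [hΦdef]
    simp only
    rw [integral_sq_eq (hPdeg c)]
    rw [← Fin.sum_univ_eq_sum_range (fun i => ∑ j ∈ range (q+1),
      (P c).coeff i * (P c).coeff j / ((i : ℝ) + j + 1)) n]
    refine Finset.sum_congr rfl fun i _ => ?_
    rw [← Fin.sum_univ_eq_sum_range (fun j =>
      (P c).coeff (i : ℕ) * (P c).coeff j / (((i : ℕ) : ℝ) + j + 1)) n]
    refine Finset.sum_congr rfl fun j _ => ?_
    rw [hPcoeff, hPcoeff]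
  have hΦcont : Continuous Φ := by
    have : Φ = fun c : Fin n → ℝ => ∑ i : Fin n, ∑ j : Fin n,
        c i * c j / (((i : ℕ) : ℝ) + ((j : ℕ) : ℝ) + 1) := funext hΦ
    rw [this]
    refine continuous_finset_sum _ fun i _ => continuous_finset_sum _ fun j _ => ?_
    exact ((continuous_apply i).mul (continuous_apply j)).div_const _
  -- compactness
  have hK : IsCompact (Metric.sphere (0 : Fin n → ℝ) 1) := isCompact_sphere 0 1
  have hne : (Metric.sphere (0 : Fin n → ℝ) 1).Nonempty :=
    NormedSpace.sphere_nonempty.mpr zero_le_one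
  obtain ⟨c₀, hc₀S, hmin⟩ := hK.exists_isMinOn hne hΦcont.continuousOn
  have hc₀ : c₀ ≠ 0 := by
    intro h
    have := mem_sphere_zero_iff_norm.mp hc₀S
    rw [h, norm_zero] at this; norm_num at this
  have hm₀ : 0 < Φ c₀ := by
    obtain ⟨i, hi⟩ := Function.ne_iff.mp hc₀
    have hPne : P c₀ ≠ 0 := by
      intro h
      apply hi
      have := hPcoeff c₀ i
      rw [h] at this
      simpa using this.symm
    have hfin := Polynomial.finite_setOf_isRoot hPne
    have hinf : (Icc (0:ℝ) 1).Infinite := Set.Icc_infinite (by norm_num)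
    obtain ⟨x, hx⟩ := (hinf.diff hfin).nonempty
    refine intervalIntegral.integral_pos one_pos ?_ (fun t _ => sq_nonneg _) ?_
    · exact (Polynomial.continuous _).continuousOn.pow 2
    · refine ⟨x, hx.1, ?_⟩
      have : (P c₀).eval x ≠ 0 := fun h => hx.2 h
      exact pow_two_pos_of_ne_zero this
  -- scaling
  have hscale : ∀ (t : ℝ) (c), Φ (t • c) = t ^ 2 * Φ c := by
    intro t c
    rw [hΦ, hΦ, Finset.mul_sum]
    refine Finset.sum_congr rfl fun i _ => ?_
    rw [Finset.mul_sum]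
    refine Finset.sum_congr rfl fun j _ => ?_
    simp only [Pi.smul_apply, smul_eq_mul]
    ring
  have hlower : ∀ c : Fin n → ℝ, Φ c₀ * ‖c‖ ^ 2 ≤ Φ c := by
    intro c
    rcases eq_or_ne c 0 with rfl | hc
    · have h0 : Φ 0 = 0 := by rw [hΦ]; simp
      simp [h0]
    · have hnc : ‖c‖ ≠ 0 := norm_ne_zero_iff.mpr hc
      have hu : (‖c‖⁻¹ • c) ∈ Metric.sphere (0 : Fin n → ℝ) 1 := by
        rw [mem_sphere_zero_iff_norm, norm_smul, norm_inv, norm_norm]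
        field_simp
      have h1 : Φ c₀ ≤ Φ (‖c‖⁻¹ • c) := hmin hu
      have h2 : Φ c = ‖c‖ ^ 2 * Φ (‖c‖⁻¹ • c) := by
        conv_lhs => rw [← smul_inv_smul₀ hnc c]
        rw [hscale]
      rw [h2]
      have := norm_nonneg c
      nlinarith
  refine ⟨Φ c₀ / (n : ℝ) ^ 2, by positivity, ?_⟩
  intro g hg
  set c : Fin n → ℝ := fun i => g.coeff (i : ℕ) with hc
  have hPg : P c = g := by
    conv_rhs => rw [Polynomial.as_sum_range' g n (lt_of_le_of_lt hg (Nat.lt_succ_self q))]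
    rw [← Fin.sum_univ_eq_sum_range (fun i => Polynomial.monomial i (g.coeff i)) n]
  have hint : (∫ t in (0:ℝ)..1, (g.eval t) ^ 2) = Φ c := by rw [hΦdef]; simp only [hPg]
  have hT : (∑ i ∈ range n, |g.coeff i|) ≤ (n : ℝ) * ‖c‖ := by
    rw [← Fin.sum_univ_eq_sum_range (fun i => |g.coeff i|) n]
    calc (∑ i : Fin n, |g.coeff (i : ℕ)|) ≤ ∑ _i : Fin n, ‖c‖ := by
          refine Finset.sum_le_sum fun i _ => ?_
          have := norm_le_pi_norm c i
          simpa using this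
      _ = (n : ℝ) * ‖c‖ := by simp [Finset.sum_const, nsmul_eq_mul]
  have hTnn : 0 ≤ ∑ i ∈ range n, |g.coeff i| := Finset.sum_nonneg fun i _ => abs_nonneg _
  have hT2 : (∑ i ∈ range n, |g.coeff i|) ^ 2 ≤ (n : ℝ) ^ 2 * ‖c‖ ^ 2 := by
    have := pow_le_pow_left₀ hTnn hT 2
    rw [mul_pow] at this
    exact this
  rw [hint]
  have hl := hlower c
  have hnpos : (0 : ℝ) < (n : ℝ) ^ 2 := by positivity
  rw [div_mul_eq_mul_div, div_le_iff₀ hnpos] at *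
  calc Φ c₀ * (∑ i ∈ range n, |g.coeff i|) ^ 2 ≤ Φ c₀ * ((n:ℝ)^2 * ‖c‖^2) :=
        mul_le_mul_of_nonneg_left hT2 hm₀.le
    _ ≤ Φ c * (n:ℝ)^2 := by nlinarith

lemma riemann_bound (f : ℝ → ℝ) (hf : Continuous f) (K : ℝ) (hK0 : 0 ≤ K)
    (hK : ∀ x ∈ Icc (0:ℝ) 1, ∀ y ∈ Icc (0:ℝ) 1, |f x - f y| ≤ K * |x - y|)
    (α : ℝ) (hα0 : 0 ≤ α) (hα1 : α ≤ 1) (J : ℕ) (hJ : 1 ≤ J) :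
    |(∫ t in (0:ℝ)..1, f t) - (1 / (J:ℝ)) * ∑ j ∈ range J, f (((j:ℝ) + α) / J)| ≤ K / J := by
  have hJ0 : (0:ℝ) < J := by exact_mod_cast Nat.lt_of_lt_of_le Nat.zero_lt_one hJ
  have hint : ∀ u v : ℝ, IntervalIntegrable f MeasureTheory.volume u v :=
    fun u v => hf.intervalIntegrable u v
  have hsplit : (∫ t in (0:ℝ)..1, f t) =
      ∑ j ∈ range J, ∫ t in ((j:ℝ)/J)..(((j:ℝ)+1)/J), f t := by
    have h := intervalIntegral.sum_integral_adjacent_intervals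
      (μ := MeasureTheory.volume) (f := f)
      (a := fun k : ℕ => (k:ℝ)/J) (n := J) (fun k _ => hint _ _)
    push_cast at h
    rw [zero_div, div_self hJ0.ne'] at h
    exact h.symm
  have key : ∀ j ∈ range J,
      |(∫ t in ((j:ℝ)/J)..(((j:ℝ)+1)/J), f t) - 1/(J:ℝ) * f (((j:ℝ)+α)/J)| ≤ K / (J:ℝ)^2 := by
    intro j hj
    have hjJ : (j:ℝ) + 1 ≤ J := by exact_mod_cast Finset.mem_range.mp hj
    have hj0 : (0:ℝ) ≤ j := Nat.cast_nonneg j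
    have hlohi : (j:ℝ)/J ≤ ((j:ℝ)+1)/J := by gcongr <;> linarith
    have hwidth : ((j:ℝ)+1)/J - (j:ℝ)/J = 1/(J:ℝ) := by field_simp; ring
    have hlo0 : 0 ≤ (j:ℝ)/J := by positivity
    have hhi1 : ((j:ℝ)+1)/J ≤ 1 := (div_le_one hJ0).mpr hjJ
    have htj_lo : (j:ℝ)/J ≤ ((j:ℝ)+α)/J := by gcongr <;> linarith
    have htj_hi : ((j:ℝ)+α)/J ≤ ((j:ℝ)+1)/J := by gcongr <;> linarith
    have h1 : (∫ t in ((j:ℝ)/J)..(((j:ℝ)+1)/J), f t) - 1/(J:ℝ) * f (((j:ℝ)+α)/J)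
        = ∫ t in ((j:ℝ)/J)..(((j:ℝ)+1)/J), (f t - f (((j:ℝ)+α)/J)) := by
      rw [intervalIntegral.integral_sub (hint _ _) intervalIntegrable_const,
        intervalIntegral.integral_const, smul_eq_mul, hwidth]
    rw [h1]
    have hptwise : ∀ t ∈ Icc ((j:ℝ)/J) (((j:ℝ)+1)/J), |f t - f (((j:ℝ)+α)/J)| ≤ K / J := by
      intro t ht
      have ht0 : 0 ≤ t := le_trans hlo0 ht.1
      have ht1 : t ≤ 1 := le_trans ht.2 hhi1
      have htj0 : 0 ≤ ((j:ℝ)+α)/J := le_trans hlo0 htj_lo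
      have htj1 : ((j:ℝ)+α)/J ≤ 1 := le_trans htj_hi hhi1
      have hdist : |t - ((j:ℝ)+α)/J| ≤ 1/(J:ℝ) := by
        rw [abs_le]
        constructor <;> [nlinarith [ht.1, htj_hi, hwidth]; nlinarith [ht.2, htj_lo, hwidth]]
      calc |f t - f (((j:ℝ)+α)/J)| ≤ K * |t - ((j:ℝ)+α)/J| :=
            hK t ⟨ht0, ht1⟩ _ ⟨htj0, htj1⟩
        _ ≤ K * (1/(J:ℝ)) := mul_le_mul_of_nonneg_left hdist hK0
        _ = K / J := by ring
    calc |∫ t in ((j:ℝ)/J)..(((j:ℝ)+1)/J), (f t - f (((j:ℝ)+α)/J))|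
        ≤ ∫ t in ((j:ℝ)/J)..(((j:ℝ)+1)/J), |f t - f (((j:ℝ)+α)/J)| :=
          intervalIntegral.abs_integral_le_integral_abs hlohi
      _ ≤ ∫ _t in ((j:ℝ)/J)..(((j:ℝ)+1)/J), (K/(J:ℝ)) := by
          refine intervalIntegral.integral_mono_on hlohi ?_ intervalIntegrable_const hptwise
          exact ((hf.sub continuous_const).abs).intervalIntegrable _ _
      _ = K / (J:ℝ)^2 := by
          rw [intervalIntegral.integral_const, smul_eq_mul, hwidth]
          ring
  rw [hsplit, Finset.mul_sum, ← Finset.sum_sub_distrib]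
  refine (Finset.abs_sum_le_sum_abs _ _).trans ?_
  calc (∑ j ∈ range J, |(∫ t in ((j:ℝ)/J)..(((j:ℝ)+1)/J), f t) - 1/(J:ℝ) * f (((j:ℝ)+α)/J)|)
      ≤ ∑ _j ∈ range J, K/(J:ℝ)^2 := Finset.sum_le_sum key
    _ = (J:ℝ) * (K/(J:ℝ)^2) := by rw [Finset.sum_const, Finset.card_range, nsmul_eq_mul]
    _ = K / J := by field_simp

theorem stmt6 (q : ℕ) :
    ∃ C : ℝ, 1 < C ∧
      ∀ p : Polynomial ℝ, p.natDegree ≤ q →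
      ∀ a b : ℝ, a < b →
      ∀ α : ℝ, 0 ≤ α → α < 1 →
      ∀ J : ℕ, 2 ≤ J →
        |(∫ x in a..b, (p.eval x) ^ 2) -
            (b - a) / (J : ℝ) *
              ∑ j ∈ (Finset.range (J + 1)).filter (fun j : ℕ => (j : ℝ) + α ≤ (J : ℝ)),
                (p.eval (a + (((j : ℝ) + α) / (J : ℝ)) * (b - a))) ^ 2|
          ≤ C / ((J : ℝ) - 1) * ∫ x in a..b, (p.eval x) ^ 2 := by
  classical
  obtain ⟨m, hm, hkey⟩ := key_lemma q
  refine ⟨max 2 ((2*(q:ℝ)+1)/m), lt_of_lt_of_le one_lt_two (le_max_left _ _), ?_⟩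
  intro p hp a b hab α hα0 hα1 J hJ
  set C : ℝ := max 2 ((2*(q:ℝ)+1)/m) with hCdef
  have hC2 : (2:ℝ) ≤ C := le_max_left _ _
  have hC1 : (2*(q:ℝ)+1)/m ≤ C := le_max_right _ _
  have hba : (0:ℝ) < b - a := sub_pos.mpr hab
  have hJ0 : (0:ℝ) < J := by positivity
  have hJ2 : (2:ℝ) ≤ (J:ℝ) := by exact_mod_cast hJ
  have hJm1 : (0:ℝ) < (J:ℝ) - 1 := by linarith
  set g : Polynomial ℝ := p.comp (Polynomial.C (b-a) * Polynomial.X + Polynomial.C a)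
    with hgdef
  have hgdeg : g.natDegree ≤ q := by
    refine (Polynomial.natDegree_comp_le).trans ?_
    rw [Polynomial.natDegree_linear (sub_ne_zero.mpr hab.ne'), mul_one]
    exact hp
  have hgeval : ∀ t : ℝ, g.eval t = p.eval ((b-a) * t + a) := by
    intro t; rw [hgdef, Polynomial.eval_comp]; simp
  set T : ℝ := ∑ i ∈ Finset.range (q+1), |g.coeff i| with hTdef
  have hT0 : 0 ≤ T := Finset.sum_nonneg fun i _ => abs_nonneg _
  set f : ℝ → ℝ := fun t => (g.eval t)^2 with hfdef
  have hfeval : ∀ t : ℝ, f t = (g.eval t)^2 := fun t => rfl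
  have hfc : Continuous f := (Polynomial.continuous g).pow 2
  have hKlip : ∀ x ∈ Icc (0:ℝ) 1, ∀ y ∈ Icc (0:ℝ) 1,
      |f x - f y| ≤ (2*(q:ℝ)*T^2) * |x-y| := by
    intro x hx y hy
    have h1 : |g.eval x - g.eval y| ≤ ((q:ℝ)*T) * |x-y| :=
      eval_lip hgdeg hx.1 hx.2 hy.1 hy.2
    have h2 : |g.eval x| ≤ T := eval_abs_le hgdeg hx.1 hx.2
    have h3 : |g.eval y| ≤ T := eval_abs_le hgdeg hy.1 hy.2
    have h5 : f x - f y = (g.eval x + g.eval y) * (g.eval x - g.eval y) := by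
      rw [hfeval, hfeval]; ring
    rw [h5, abs_mul]
    have h4 : |g.eval x + g.eval y| ≤ 2*T := (abs_add_le _ _).trans (by linarith)
    calc |g.eval x + g.eval y| * |g.eval x - g.eval y|
        ≤ (2*T) * (((q:ℝ)*T)*|x-y|) :=
          mul_le_mul h4 h1 (abs_nonneg _) (by positivity)
      _ = (2*(q:ℝ)*T^2) * |x-y| := by ring
  -- change of variables
  have hchange : (∫ x in a..b, (p.eval x)^2) = (b-a) * ∫ t in (0:ℝ)..1, f t := by
    have h := intervalIntegral.integral_comp_mul_add (a := (0:ℝ)) (b := 1)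
      (fun x => (p.eval x)^2) hba.ne' a
    have e1 : (b-a)*0 + a = a := by ring
    have e2 : (b-a)*1 + a = b := by ring
    rw [e1, e2] at h
    have h2 : (∫ t in (0:ℝ)..1, f t) = ∫ t in (0:ℝ)..1, (p.eval ((b-a)*t + a))^2 :=
      intervalIntegral.integral_congr fun t _ => by rw [hfeval, hgeval]
    rw [h2, h, smul_eq_mul]
    field_simp
  -- the point identity
  have hpoint : ∀ s : ℝ, (p.eval (a + s*(b-a)))^2 = f s := by
    intro s
    rw [hfeval, hgeval]
    have : a + s*(b-a) = (b-a)*s + a := by ring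
    rw [this]
  have hsum : (∑ j ∈ (Finset.range (J + 1)).filter (fun j : ℕ => (j : ℝ) + α ≤ (J : ℝ)),
        (p.eval (a + (((j : ℝ) + α) / (J : ℝ)) * (b - a))) ^ 2)
      = ∑ j ∈ (Finset.range (J + 1)).filter (fun j : ℕ => (j : ℝ) + α ≤ (J : ℝ)),
        f (((j:ℝ) + α) / J) :=
    Finset.sum_congr rfl fun j _ => hpoint _
  have hfilter : (Finset.range (J + 1)).filter (fun j : ℕ => (j : ℝ) + α ≤ (J : ℝ))
      = if (J:ℝ) + α ≤ (J:ℝ) then insert J (Finset.range J) else Finset.range J := by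
    rw [Finset.range_add_one, Finset.filter_insert,
      Finset.filter_true_of_mem (fun j hj => ?_)]
    have hjlt := Finset.mem_range.mp hj
    have : (j:ℝ) + 1 ≤ J := by exact_mod_cast hjlt
    linarith
  have hSfull : (∑ j ∈ (Finset.range (J + 1)).filter (fun j : ℕ => (j : ℝ) + α ≤ (J : ℝ)),
        f (((j:ℝ) + α) / J))
      = (∑ j ∈ Finset.range J, f (((j:ℝ) + α) / J))
        + (if (J:ℝ) + α ≤ (J:ℝ) then f (((J:ℝ)+α)/J) else 0) := by
    rw [hfilter]
    split_ifs with h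
    · rw [Finset.sum_insert Finset.notMem_range_self, add_comm]
    · rw [add_zero]
  have hε : |if (J:ℝ) + α ≤ (J:ℝ) then f (((J:ℝ)+α)/J) else 0| ≤ T^2 := by
    split_ifs with h
    · have hα' : α = 0 := le_antisymm (by linarith) hα0
      have e3 : ((J:ℝ)+α)/J = 1 := by rw [hα', add_zero, div_self hJ0.ne']
      rw [e3, hfeval]
      have h2 : |g.eval 1| ≤ T := eval_abs_le hgdeg zero_le_one le_rfl
      rw [abs_of_nonneg (sq_nonneg _), ← sq_abs]
      exact pow_le_pow_left₀ (abs_nonneg _) h2 2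
    · simpa using sq_nonneg T
  have hR := riemann_bound f hfc (2*(q:ℝ)*T^2) (by positivity) hKlip α hα0 hα1.le J
    (by omega)
  set I : ℝ := ∫ t in (0:ℝ)..1, f t with hIdef
  have hE : |I - (1/(J:ℝ)) * ∑ j ∈ (Finset.range (J + 1)).filter
        (fun j : ℕ => (j : ℝ) + α ≤ (J : ℝ)), f (((j:ℝ) + α) / J)|
      ≤ (2*(q:ℝ)*T^2)/J + T^2/J := by
    rw [hSfull, mul_add]
    have h6 : I - ((1/(J:ℝ)) * ∑ j ∈ Finset.range J, f (((j:ℝ) + α) / J)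
        + (1/(J:ℝ)) * (if (J:ℝ) + α ≤ (J:ℝ) then f (((J:ℝ)+α)/J) else 0))
        = (I - (1/(J:ℝ)) * ∑ j ∈ Finset.range J, f (((j:ℝ) + α) / J))
          - (1/(J:ℝ)) * (if (J:ℝ) + α ≤ (J:ℝ) then f (((J:ℝ)+α)/J) else 0) := by ring
    rw [h6]
    refine (abs_sub _ _).trans ?_
    have h7 : |(1/(J:ℝ)) * (if (J:ℝ) + α ≤ (J:ℝ) then f (((J:ℝ)+α)/J) else 0)|
        ≤ (1/(J:ℝ)) * T^2 := by
      rw [abs_mul, abs_of_nonneg (by positivity : (0:ℝ) ≤ 1/(J:ℝ))]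
      exact mul_le_mul_of_nonneg_left hε (by positivity)
    have h8 := hR
    calc |I - (1/(J:ℝ)) * ∑ j ∈ Finset.range J, f (((j:ℝ) + α) / J)|
          + |(1/(J:ℝ)) * (if (J:ℝ) + α ≤ (J:ℝ) then f (((J:ℝ)+α)/J) else 0)|
        ≤ (2*(q:ℝ)*T^2)/J + (1/(J:ℝ))*T^2 := add_le_add h8 h7
      _ = (2*(q:ℝ)*T^2)/J + T^2/J := by ring
  have hIlow : m * T^2 ≤ I := hkey g hgdeg
  have hInn : 0 ≤ I := le_trans (by positivity) hIlow
  -- final chain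
  rw [hchange, hsum]
  have hsplit2 : (b-a)*I - (b - a) / (J:ℝ) * ∑ j ∈ (Finset.range (J + 1)).filter
        (fun j : ℕ => (j : ℝ) + α ≤ (J : ℝ)), f (((j:ℝ) + α) / J)
      = (b-a) * (I - (1/(J:ℝ)) * ∑ j ∈ (Finset.range (J + 1)).filter
        (fun j : ℕ => (j : ℝ) + α ≤ (J : ℝ)), f (((j:ℝ) + α) / J)) := by ring
  rw [hsplit2, abs_mul, abs_of_pos hba]
  have hCm : (2*(q:ℝ)+1) ≤ C * m := by
    rw [div_le_iff₀ hm] at hC1; linarith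
  have hfrac : (2*(q:ℝ)+1)/(J:ℝ) ≤ (C*m)/((J:ℝ)-1) := by
    refine div_le_div₀ (by nlinarith) hCm hJm1 (by linarith)
  calc (b-a) * |I - (1/(J:ℝ)) * ∑ j ∈ (Finset.range (J + 1)).filter
        (fun j : ℕ => (j : ℝ) + α ≤ (J : ℝ)), f (((j:ℝ) + α) / J)|
      ≤ (b-a) * ((2*(q:ℝ)*T^2)/J + T^2/J) := mul_le_mul_of_nonneg_left hE hba.le
    _ = ((2*(q:ℝ)+1)/(J:ℝ)) * ((b-a)*T^2) := by ring
    _ ≤ ((C*m)/((J:ℝ)-1)) * ((b-a)*T^2) :=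
        mul_le_mul_of_nonneg_right hfrac (by positivity)
    _ = C/((J:ℝ)-1) * ((b-a)*(m*T^2)) := by ring
    _ ≤ C/((J:ℝ)-1) * ((b-a)*I) := by
        refine mul_le_mul_of_nonneg_left ?_ (by positivity)
        exact mul_le_mul_of_nonneg_left hIlow hba.le
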